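/- Let S = {(x₁,x₂) ∈ ℝ² : x₁²+x₂² = 1} be the unit circle and let P(x₁,x₂,x₃) = (1−x₁)x₃⁴ + 4x₂x₃³ + (2+6x₁)x₃² − 4x₂x₃ + (1−x₁). Then for every t ∈ ℝ, the projective roots of P above (cos t, sin t) ∈ S are exactly the two points (sin(t/4) : cos(t/4)) and (−cos(t/4) : sin(t/4)) of ℝP¹, each of multiplicity two with respect to degree 4; consequently Z_{ℝP¹}(P,S) is connected (being the image of ℝ under t ↦ (cos t, sin t, (sin(t/4):cos(t/4)))), and P is not projectively delineable over S. -/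

import Mathlib

noncomputable section

open Polynomial Finset

/-- The real projective line `ℝP¹`: the quotient of `ℝ² ∖ {0}` by proportionality. -/
abbrev RP1 : Type := Projectivization ℝ (Fin 2 → ℝ)

/-- The quotient topology on the real projective line. -/
instance : TopologicalSpace RP1 :=
  inferInstanceAs (TopologicalSpace (Quotient (projectivizationSetoid ℝ (Fin 2 → ℝ))))

/-- Homogenization of a univariate real polynomial with respect to the degree `d`,
as a binary form (an element of `ℝ[x,y]`, homogeneous of degree `d` when `P.natDegree ≤ d`):
`H^d(P)(x,y) = ∑_{k=0}^d c_k x^k y^(d-k)`. -/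
def homog (d : ℕ) (P : Polynomial ℝ) : MvPolynomial (Fin 2) ℝ :=
  ∑ k ∈ Finset.range (d + 1),
    MvPolynomial.C (P.coeff k) * MvPolynomial.X 0 ^ k * MvPolynomial.X 1 ^ (d - k)

/-- The pull-back `ι_M^{*}` of a binary form `g` along the parametrized line
`ι_M : x ↦ M (x,1)ᵀ`, i.e. the univariate polynomial `g(m₁₁ x + m₁₂, m₂₁ x + m₂₂)`.
For `M = 1` this is the standard pull-back `ι^{*d} g = g(x, 1)`. -/
def pullM (M : Matrix (Fin 2) (Fin 2) ℝ) (g : MvPolynomial (Fin 2) ℝ) : Polynomial ℝ :=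
  MvPolynomial.eval₂ Polynomial.C
    ![Polynomial.C (M 0 0) * Polynomial.X + Polynomial.C (M 0 1),
      Polynomial.C (M 1 0) * Polynomial.X + Polynomial.C (M 1 1)] g

/-- Right composition `R_M g = g ∘ M` of a binary form with a linear map of `ℝ²`. -/
def compM (M : Matrix (Fin 2) (Fin 2) ℝ) (g : MvPolynomial (Fin 2) ℝ) : MvPolynomial (Fin 2) ℝ :=
  MvPolynomial.eval₂ MvPolynomial.C
    (fun i => ∑ j, MvPolynomial.C (M i j) * MvPolynomial.X j) g

/-- The operator `A^{*d} P = ι_A^{*d} (H^d P)`, i.e.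
`A^{*d}P(x) = ∑_{k=0}^d c_k (a₁₁x+a₁₂)^k (a₂₁x+a₂₂)^{d-k}` for `P = ∑ c_k x^k`. -/
def AstarU (d : ℕ) (M : Matrix (Fin 2) (Fin 2) ℝ) (P : Polynomial ℝ) : Polynomial ℝ :=
  pullM M (homog d P)

/-- The Sylvester matrix of `P` and `Q` with respect to the fixed degrees `p` and `q`
(padding with zero coefficients as if `deg P = p` and `deg Q = q`). -/
def sylvester {R : Type*} [CommRing R] (p q : ℕ) (P Q : Polynomial R) :
    Matrix (Fin (p + q)) (Fin (p + q)) R := fun i j =>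
  if (i : ℕ) < q then
    (if (i : ℕ) ≤ (j : ℕ) ∧ (j : ℕ) ≤ (i : ℕ) + p then P.coeff (p + (i : ℕ) - (j : ℕ)) else 0)
  else
    (if (i : ℕ) - q ≤ (j : ℕ) ∧ (j : ℕ) ≤ (i : ℕ) then Q.coeff (q + ((i : ℕ) - q) - (j : ℕ)) else 0)

/-- The resultant `Res^{p,q}(P,Q)` with respect to the fixed degrees `p` and `q`:
the determinant of the corresponding Sylvester matrix. -/
def resFixed {R : Type*} [CommRing R] (p q : ℕ) (P Q : Polynomial R) : R :=
  (sylvester p q P Q).det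

/-- The discriminant `Disc^p(P)` of `P` with respect to the fixed degree `p`: the resultant
(with respect to degrees `(p-1, p-1)`) of the pull-backs of the two partial derivatives
`F_x`, `F_y` of the binary form `F = H^p(P)`; these pull-backs are `P'` and `p·P − x·P'`. -/
def discFixed {R : Type*} [CommRing R] (p : ℕ) (P : Polynomial R) : R :=
  (-1) ^ (p * (p - 1) / 2) *
    resFixed (p - 1) (p - 1) (Polynomial.derivative P)
      (Polynomial.C (p : R) * P - Polynomial.X * Polynomial.derivative P)

/-- Evaluation `E_x` of a polynomial in `x₁,…,x_m;x_n` at `x ∈ ℝ^m` in its first `m`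
variables, giving a univariate real polynomial in `x_n`. -/
def evalP {m : ℕ} (P : Polynomial (MvPolynomial (Fin m) ℝ)) (x : Fin m → ℝ) : Polynomial ℝ :=
  P.map (MvPolynomial.eval x : MvPolynomial (Fin m) ℝ →+* ℝ)

/-- The operator `A^{*d}` acting on the last variable of a polynomial in `x₁,…,x_m;x_n`:
`A^{*d}P(x,x_n) = ∑_{k=0}^d c_k(x) (a₁₁x_n+a₁₂)^k (a₂₁x_n+a₂₂)^{d-k}`. -/
def AstarPoly {m : ℕ} (d : ℕ) (M : Matrix (Fin 2) (Fin 2) ℝ)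
    (P : Polynomial (MvPolynomial (Fin m) ℝ)) : Polynomial (MvPolynomial (Fin m) ℝ) :=
  ∑ k ∈ Finset.range (d + 1),
    Polynomial.C (P.coeff k) *
      (Polynomial.C (MvPolynomial.C (M 0 0)) * Polynomial.X
        + Polynomial.C (MvPolynomial.C (M 0 1))) ^ k *
      (Polynomial.C (MvPolynomial.C (M 1 0)) * Polynomial.X
        + Polynomial.C (MvPolynomial.C (M 1 1))) ^ (d - k)

/-- The order of a (polynomial) function at a point: the smallest `k` such that some
partial derivative of total order `k` does not vanish at the point, i.e. the smallest `k`
with `iteratedFDeriv ℝ k f v ≠ 0`; it is `⊤` if all derivatives vanish. -/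
def ordAt {E : Type*} [NormedAddCommGroup E] [NormedSpace ℝ E] (f : E → ℝ) (v : E) : ℕ∞ :=
  sInf {k : ℕ∞ | ∃ n : ℕ, k = n ∧ iteratedFDeriv ℝ n f v ≠ 0}

/-- A function is order-invariant on a set if it has the same order at every point of the set. -/
def OrderInvariantOn {E : Type*} [NormedAddCommGroup E] [NormedSpace ℝ E]
    (f : E → ℝ) (S : Set E) : Prop :=
  ∀ x ∈ S, ∀ y ∈ S, ordAt f x = ordAt f y

/-- `(v 0 : v 1)` is a projective root of the binary form `g` of multiplicity (exactly) `mult`: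
in the factorization of `g`, the linear form vanishing on the line through `v` occurs with
exponent `mult`. -/
def HasProjRootOfMult (g : MvPolynomial (Fin 2) ℝ) (v : Fin 2 → ℝ) (mult : ℕ) : Prop :=
  ∃ h : MvPolynomial (Fin 2) ℝ,
    g = (MvPolynomial.C (v 1) * MvPolynomial.X 0 - MvPolynomial.C (v 0) * MvPolynomial.X 1) ^ mult * h
      ∧ MvPolynomial.eval v h ≠ 0

/-- The projective zero set `Z_{ℝP¹}(P,S)` of `P` over `S`, with respect to the degree `d`
in the last variable: the set of `(x, (x_n : y))` with `x ∈ S` and `H^d(P)(x,(x_n,y)) = 0`. -/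
def ZProj {m : ℕ} (d : ℕ) (P : Polynomial (MvPolynomial (Fin m) ℝ)) (S : Set (Fin m → ℝ)) :
    Set ((Fin m → ℝ) × RP1) :=
  {p | p.1 ∈ S ∧ ∃ (v : Fin 2 → ℝ) (hv : v ≠ 0),
    Projectivization.mk ℝ v hv = p.2 ∧ MvPolynomial.eval v (homog d (evalP P p.1)) = 0}

/-- `θ` is a (finite) system of real root functions for `P` on `S`: continuous functions with
pairwise disjoint graphs whose union is `Z_ℝ(P,S)`, each of constant positive multiplicity. -/
def IsRealRootFunctions {m : ℕ} (P : Polynomial (MvPolynomial (Fin m) ℝ)) (S : Set (Fin m → ℝ))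
    {k : ℕ} (θ : Fin k → (Fin m → ℝ) → ℝ) : Prop :=
  (∀ l, ContinuousOn (θ l) S) ∧
  (∀ x ∈ S, ∀ l l' : Fin k, l ≠ l' → θ l x ≠ θ l' x) ∧
  (∀ x ∈ S, ∀ t : ℝ, (evalP P x).eval t = 0 ↔ ∃ l, θ l x = t) ∧
  (∀ l : Fin k, ∃ mult : ℕ, 0 < mult ∧ ∀ x ∈ S, (evalP P x).rootMultiplicity (θ l x) = mult)

/-- `P` is delineable on `S`. -/
def Delineable {m : ℕ} (P : Polynomial (MvPolynomial (Fin m) ℝ)) (S : Set (Fin m → ℝ)) : Prop :=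
  ∃ (k : ℕ) (θ : Fin k → (Fin m → ℝ) → ℝ), IsRealRootFunctions P S θ

/-- `θ` is a (finite) system of projective root functions for `P` on `S` with respect to the
degree `d` in the last variable: continuous functions into `ℝP¹` with pairwise disjoint graphs
whose union is `Z_{ℝP¹}(P,S)`, each of constant positive multiplicity. -/
def IsProjRootFunctions {m : ℕ} (d : ℕ) (P : Polynomial (MvPolynomial (Fin m) ℝ))
    (S : Set (Fin m → ℝ)) {k : ℕ} (θ : Fin k → (Fin m → ℝ) → RP1) : Prop :=
  (∀ l, ContinuousOn (θ l) S) ∧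
  (∀ x ∈ S, ∀ l l' : Fin k, l ≠ l' → θ l x ≠ θ l' x) ∧
  (∀ x ∈ S, ∀ (v : Fin 2 → ℝ) (hv : v ≠ 0),
    (MvPolynomial.eval v (homog d (evalP P x)) = 0 ↔ ∃ l, θ l x = Projectivization.mk ℝ v hv)) ∧
  (∀ l : Fin k, ∃ mult : ℕ, 0 < mult ∧ ∀ x ∈ S, ∀ (v : Fin 2 → ℝ) (hv : v ≠ 0),
    θ l x = Projectivization.mk ℝ v hv → HasProjRootOfMult (homog d (evalP P x)) v mult)

/-- `P` is projectively delineable on `S` (with respect to the degree `d` in the last variable). -/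
def ProjDelineable {m : ℕ} (d : ℕ) (P : Polynomial (MvPolynomial (Fin m) ℝ))
    (S : Set (Fin m → ℝ)) : Prop :=
  ∃ (k : ℕ) (θ : Fin k → (Fin m → ℝ) → RP1), IsProjRootFunctions d P S θ

/-- `S` is an analytic submanifold of `ℝ^m`: around each of its points, in suitable
real-analytic coordinates, `S` is an open piece of a linear subspace. -/
def IsAnalyticSubmanifold {m : ℕ} (S : Set (Fin m → ℝ)) : Prop :=
  ∀ s ∈ S, ∃ (U V : Set (Fin m → ℝ)) (φ ψ : (Fin m → ℝ) → (Fin m → ℝ))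
      (L : Submodule ℝ (Fin m → ℝ)),
    IsOpen U ∧ IsOpen V ∧ s ∈ U ∧
    AnalyticOnNhd ℝ φ U ∧ AnalyticOnNhd ℝ ψ V ∧
    Set.MapsTo φ U V ∧ Set.MapsTo ψ V U ∧
    Set.EqOn (ψ ∘ φ) id U ∧ Set.EqOn (φ ∘ ψ) id V ∧
    φ '' (U ∩ S) = V ∩ (L : Set (Fin m → ℝ))

end

/-- The unit circle in `ℝ²`. -/
def circleS : Set (Fin 2 → ℝ) := {x : Fin 2 → ℝ | x 0 ^ 2 + x 1 ^ 2 = 1}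

/-- The polynomial `P(x₁,x₂,x₃) = (1−x₁)x₃⁴ + 4x₂x₃³ + (2+6x₁)x₃² − 4x₂x₃ + (1−x₁)`. -/
noncomputable def Pex : Polynomial (MvPolynomial (Fin 2) ℝ) :=
  Polynomial.C (1 - MvPolynomial.X 0) * Polynomial.X ^ 4 +
  Polynomial.C (4 * MvPolynomial.X 1) * Polynomial.X ^ 3 +
  Polynomial.C (2 + 6 * MvPolynomial.X 0) * Polynomial.X ^ 2 -
  Polynomial.C (4 * MvPolynomial.X 1) * Polynomial.X +
  Polynomial.C (1 - MvPolynomial.X 0)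

lemma sincos_ne (u : ℝ) : (![Real.sin u, Real.cos u] : Fin 2 → ℝ) ≠ 0 := by
  intro h
  have h0 : Real.sin u = 0 := by simpa using congrFun h 0
  have h1 : Real.cos u = 0 := by simpa using congrFun h 1
  have h2 := Real.sin_sq_add_cos_sq u
  rw [h0, h1] at h2
  norm_num at h2

lemma negcossin_ne (u : ℝ) : (![-Real.cos u, Real.sin u] : Fin 2 → ℝ) ≠ 0 := by
  intro h
  have h0 : -Real.cos u = 0 := by simpa using congrFun h 0
  have h1 : Real.sin u = 0 := by simpa using congrFun h 1
  have h2 := Real.sin_sq_add_cos_sq u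
  rw [h1, neg_eq_zero.mp h0] at h2
  norm_num at h2

open MvPolynomial in
lemma homog_eval_eq (t : ℝ) :
    homog 4 (evalP Pex ![Real.cos t, Real.sin t]) =
      MvPolynomial.C 8 *
        (MvPolynomial.C (Real.cos (t/4)) * MvPolynomial.X 0
          - MvPolynomial.C (Real.sin (t/4)) * MvPolynomial.X 1) ^ 2 *
        (MvPolynomial.C (Real.sin (t/4)) * MvPolynomial.X 0
          + MvPolynomial.C (Real.cos (t/4)) * MvPolynomial.X 1) ^ 2 := by
  set s := Real.sin (t/4) with hs
  set c := Real.cos (t/4) with hc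
  have hP : evalP Pex ![Real.cos t, Real.sin t] =
      Polynomial.C (1 - Real.cos t) * Polynomial.X ^ 4
      + Polynomial.C (4 * Real.sin t) * Polynomial.X ^ 3
      + Polynomial.C (2 + 6 * Real.cos t) * Polynomial.X ^ 2
      - Polynomial.C (4 * Real.sin t) * Polynomial.X
      + Polynomial.C (1 - Real.cos t) := by
    unfold evalP Pex
    simp [Polynomial.map_add, Polynomial.map_sub, Polynomial.map_mul, Polynomial.map_pow,
      Polynomial.map_ofNat]
  have hsin : Real.sin t = 4 * s * c * (c ^ 2 - s ^ 2) := by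
    have h2 : Real.sin (2 * (t/4)) = 2 * s * c := Real.sin_two_mul _
    have h2' : Real.cos (2 * (t/4)) = c ^ 2 - s ^ 2 := Real.cos_two_mul' _
    have ht : t = 2 * (2 * (t/4)) := by ring
    rw [ht, Real.sin_two_mul, h2, h2']; ring
  have hcos : Real.cos t = c ^ 4 - 6 * c ^ 2 * s ^ 2 + s ^ 4 := by
    have h2 : Real.sin (2 * (t/4)) = 2 * s * c := Real.sin_two_mul _
    have h2' : Real.cos (2 * (t/4)) = c ^ 2 - s ^ 2 := Real.cos_two_mul' _
    have ht : t = 2 * (2 * (t/4)) := by ring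
    rw [ht, Real.cos_two_mul', h2, h2']; ring
  have hpyth : (MvPolynomial.C s : MvPolynomial (Fin 2) ℝ) ^ 2 + MvPolynomial.C c ^ 2 = 1 := by
    rw [← map_pow, ← map_pow, ← map_add]
    rw [hs, hc, Real.sin_sq_add_cos_sq, map_one]
  rw [hP]
  unfold homog
  rw [show (4:ℕ) + 1 = 5 from rfl]
  rw [hsin, hcos]
  simp only [Finset.sum_range_succ, Finset.sum_range_zero,
    Polynomial.coeff_add, Polynomial.coeff_sub, Polynomial.coeff_C_mul, Polynomial.coeff_X_pow,
    Polynomial.coeff_C, Polynomial.coeff_X]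
  norm_num
  simp only [map_add, map_sub, map_mul, map_pow, map_ofNat, map_one]
  linear_combination (-(1 + (MvPolynomial.C s : MvPolynomial (Fin 2) ℝ) ^ 2
    + MvPolynomial.C c ^ 2) * (MvPolynomial.X 0 ^ 2 + MvPolynomial.X 1 ^ 2) ^ 2) * hpyth
lemma vec_ne_zero_iff (v : Fin 2 → ℝ) : v ≠ 0 ↔ v 0 ≠ 0 ∨ v 1 ≠ 0 := by
  constructor
  · intro h
    by_contra hc
    push_neg at hc
    exact h (funext fun i => by fin_cases i <;> simp [hc.1, hc.2])
  · rintro (h | h) h0 <;> simp [h0] at h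

lemma mk_eq_mk_iff_det (v w : Fin 2 → ℝ) (hv : v ≠ 0) (hw : w ≠ 0) :
    Projectivization.mk ℝ v hv = Projectivization.mk ℝ w hw ↔ w 1 * v 0 - w 0 * v 1 = 0 := by
  rw [Projectivization.mk_eq_mk_iff' ℝ v w hv hw]
  constructor
  · rintro ⟨a, ha⟩
    have h0 : v 0 = a * w 0 := by rw [← ha]; rfl
    have h1 : v 1 = a * w 1 := by rw [← ha]; rfl
    rw [h0, h1]; ring
  · intro hdet
    rcases (vec_ne_zero_iff w).1 hw with h | h
    · refine ⟨v 0 / w 0, funext fun i => ?_⟩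
      fin_cases i
      · show v 0 / w 0 * w 0 = v 0
        field_simp
      · show v 0 / w 0 * w 1 = v 1
        field_simp
        linarith [hdet]
    · refine ⟨v 1 / w 1, funext fun i => ?_⟩
      fin_cases i
      · show v 1 / w 1 * w 0 = v 0
        field_simp
        linarith [hdet]
      · show v 1 / w 1 * w 1 = v 1
        field_simp
/-- An injective continuous map from `RP1` to the plane, used to show `RP1` is Hausdorff. -/
noncomputable def rpEmbed : RP1 → ℝ × ℝ :=
  Projectivization.lift
    (fun v => ((v.1 0 * v.1 1) / (v.1 0 ^ 2 + v.1 1 ^ 2),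
               (v.1 0 ^ 2 - v.1 1 ^ 2) / (v.1 0 ^ 2 + v.1 1 ^ 2)))
    (by
      rintro ⟨a, ha⟩ ⟨b, hb⟩ t (h : a = t • b)
      have ht : t ≠ 0 := by rintro rfl; simp at h; exact ha h
      have h0 : a 0 = t * b 0 := by rw [h]; rfl
      have h1 : a 1 = t * b 1 := by rw [h]; rfl
      have hbne : b 0 ^ 2 + b 1 ^ 2 ≠ 0 := by
        rcases (vec_ne_zero_iff b).1 hb with hh | hh <;> positivity
      have hane : t ^ 2 * (b 0 ^ 2 + b 1 ^ 2) ≠ 0 := by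
        exact mul_ne_zero (pow_ne_zero _ ht) hbne
      have hxform : (t * b 0) ^ 2 + (t * b 1) ^ 2 = t ^ 2 * (b 0 ^ 2 + b 1 ^ 2) := by ring
      simp only [h0, h1, Prod.mk.injEq, hxform]
      constructor
      · rw [div_eq_div_iff hane hbne]; ring
      · rw [div_eq_div_iff hane hbne]; ring
      )

lemma sq_add_sq_pos (v : Fin 2 → ℝ) (hv : v ≠ 0) : 0 < v 0 ^ 2 + v 1 ^ 2 := by
  rcases (vec_ne_zero_iff v).1 hv with hh | hh <;> positivity

lemma rpEmbed_injective : Function.Injective rpEmbed := by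
  intro p q h
  induction p using Projectivization.ind with
  | h v hv =>
  induction q using Projectivization.ind with
  | h w hw =>
  have hA := sq_add_sq_pos v hv
  have hB := sq_add_sq_pos w hw
  rw [rpEmbed, Projectivization.lift_mk, Projectivization.lift_mk, Prod.mk.injEq] at h
  obtain ⟨h1, h2⟩ := h
  dsimp only at h1 h2
  rw [div_eq_div_iff hA.ne' hB.ne'] at h1 h2
  rw [mk_eq_mk_iff_det v w hv hw]
  have e5 : (v 0 ^ 2 + v 1 ^ 2) * (2 * (w 1 * v 0 - w 0 * v 1) ^ 2) = 0 := by
    linear_combination (v 0 ^ 2 - v 1 ^ 2) * h2 + 4 * v 0 * v 1 * h1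
  have e6 : (2 : ℝ) * (w 1 * v 0 - w 0 * v 1) ^ 2 = 0 :=
    (mul_eq_zero.mp e5).resolve_left hA.ne'
  have key : (w 1 * v 0 - w 0 * v 1) ^ 2 = 0 := by linarith
  exact pow_eq_zero_iff (two_ne_zero) |>.1 key

lemma rpEmbed_continuous : Continuous rpEmbed := by
  apply continuous_quot_lift
  have hval : Continuous (fun v : {v : Fin 2 → ℝ // v ≠ 0} => v.1) := continuous_subtype_val
  have h0 : Continuous (fun v : {v : Fin 2 → ℝ // v ≠ 0} => v.1 0) :=
    (continuous_apply 0).comp hval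
  have h1 : Continuous (fun v : {v : Fin 2 → ℝ // v ≠ 0} => v.1 1) :=
    (continuous_apply 1).comp hval
  have hden : ∀ v : {v : Fin 2 → ℝ // v ≠ 0}, v.1 0 ^ 2 + v.1 1 ^ 2 ≠ 0 :=
    fun v => (sq_add_sq_pos v.1 v.2).ne'
  exact Continuous.prodMk
    (Continuous.div (h0.mul h1) ((h0.pow 2).add (h1.pow 2)) hden)
    (Continuous.div ((h0.pow 2).sub (h1.pow 2)) ((h0.pow 2).add (h1.pow 2)) hden)

instance : T2Space RP1 := T2Space.of_injective_continuous rpEmbed_injective rpEmbed_continuous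

lemma continuous_mk_curve {f : ℝ → Fin 2 → ℝ} (hf : Continuous f) (h : ∀ t, f t ≠ 0) :
    Continuous (fun t => Projectivization.mk ℝ (f t) (h t)) := by
  have : Continuous (fun t : ℝ => (⟨f t, h t⟩ : {v : Fin 2 → ℝ // v ≠ 0})) :=
    Continuous.subtype_mk hf _
  exact continuous_quotient_mk'.comp this
lemma eval_homog (t : ℝ) (v : Fin 2 → ℝ) :
    MvPolynomial.eval v (homog 4 (evalP Pex ![Real.cos t, Real.sin t])) =
      8 * (Real.cos (t/4) * v 0 - Real.sin (t/4) * v 1) ^ 2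
        * (Real.sin (t/4) * v 0 + Real.cos (t/4) * v 1) ^ 2 := by
  rw [homog_eval_eq]
  simp [MvPolynomial.eval_mul, MvPolynomial.eval_pow, MvPolynomial.eval_sub,
    MvPolynomial.eval_add]

lemma root_iff (t : ℝ) (v : Fin 2 → ℝ) (hv : v ≠ 0) :
    MvPolynomial.eval v (homog 4 (evalP Pex ![Real.cos t, Real.sin t])) = 0 ↔
      Projectivization.mk ℝ v hv
          = Projectivization.mk ℝ ![Real.sin (t/4), Real.cos (t/4)] (sincos_ne (t/4)) ∨
      Projectivization.mk ℝ v hv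
          = Projectivization.mk ℝ ![-Real.cos (t/4), Real.sin (t/4)] (negcossin_ne (t/4)) := by
  rw [eval_homog, mk_eq_mk_iff_det v _ hv (sincos_ne (t/4)),
    mk_eq_mk_iff_det v _ hv (negcossin_ne (t/4))]
  have e1 : (![Real.sin (t/4), Real.cos (t/4)] : Fin 2 → ℝ) 0 = Real.sin (t/4) := rfl
  have e2 : (![Real.sin (t/4), Real.cos (t/4)] : Fin 2 → ℝ) 1 = Real.cos (t/4) := rfl
  have e3 : (![-Real.cos (t/4), Real.sin (t/4)] : Fin 2 → ℝ) 0 = -Real.cos (t/4) := rfl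
  have e4 : (![-Real.cos (t/4), Real.sin (t/4)] : Fin 2 → ℝ) 1 = Real.sin (t/4) := rfl
  rw [e1, e2, e3, e4]
  constructor
  · intro h
    rcases mul_eq_zero.mp h with h | h
    · rcases mul_eq_zero.mp h with h | h
      · norm_num at h
      · left
        have := pow_eq_zero_iff (two_ne_zero) |>.1 h
        linarith
    · right
      have := pow_eq_zero_iff (two_ne_zero) |>.1 h
      linarith
  · rintro (h | h)
    · have : Real.cos (t/4) * v 0 - Real.sin (t/4) * v 1 = 0 := by linarith
      rw [this]; ring
    · have : Real.sin (t/4) * v 0 + Real.cos (t/4) * v 1 = 0 := by linarith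
      rw [this]; ring

lemma distinct_roots (t : ℝ) :
    Projectivization.mk ℝ ![Real.sin (t/4), Real.cos (t/4)] (sincos_ne (t/4))
      ≠ Projectivization.mk ℝ ![-Real.cos (t/4), Real.sin (t/4)] (negcossin_ne (t/4)) := by
  rw [Ne, mk_eq_mk_iff_det]
  have e1 : (![-Real.cos (t/4), Real.sin (t/4)] : Fin 2 → ℝ) 0 = -Real.cos (t/4) := rfl
  have e2 : (![-Real.cos (t/4), Real.sin (t/4)] : Fin 2 → ℝ) 1 = Real.sin (t/4) := rfl
  have e3 : (![Real.sin (t/4), Real.cos (t/4)] : Fin 2 → ℝ) 0 = Real.sin (t/4) := rfl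
  have e4 : (![Real.sin (t/4), Real.cos (t/4)] : Fin 2 → ℝ) 1 = Real.cos (t/4) := rfl
  rw [e1, e2, e3, e4]
  intro h
  have := Real.sin_sq_add_cos_sq (t/4)
  nlinarith [h, this]

lemma mult_two (t : ℝ) :
    HasProjRootOfMult (homog 4 (evalP Pex ![Real.cos t, Real.sin t]))
      ![Real.sin (t/4), Real.cos (t/4)] 2 ∧
    HasProjRootOfMult (homog 4 (evalP Pex ![Real.cos t, Real.sin t]))
      ![-Real.cos (t/4), Real.sin (t/4)] 2 := by
  have hpy := Real.sin_sq_add_cos_sq (t/4)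
  constructor
  · refine ⟨MvPolynomial.C 8 *
      (MvPolynomial.C (Real.sin (t/4)) * MvPolynomial.X 0
        + MvPolynomial.C (Real.cos (t/4)) * MvPolynomial.X 1) ^ 2, ?_, ?_⟩
    · rw [homog_eval_eq]
      have e1 : (![Real.sin (t/4), Real.cos (t/4)] : Fin 2 → ℝ) 0 = Real.sin (t/4) := rfl
      have e2 : (![Real.sin (t/4), Real.cos (t/4)] : Fin 2 → ℝ) 1 = Real.cos (t/4) := rfl
      rw [e1, e2]
      ring
    · simp only [MvPolynomial.eval_mul, MvPolynomial.eval_pow, MvPolynomial.eval_add,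
        MvPolynomial.eval_C, MvPolynomial.eval_X]
      have e1 : (![Real.sin (t/4), Real.cos (t/4)] : Fin 2 → ℝ) 0 = Real.sin (t/4) := rfl
      have e2 : (![Real.sin (t/4), Real.cos (t/4)] : Fin 2 → ℝ) 1 = Real.cos (t/4) := rfl
      rw [e1, e2]
      nlinarith [hpy]
  · refine ⟨MvPolynomial.C 8 *
      (MvPolynomial.C (Real.cos (t/4)) * MvPolynomial.X 0
        - MvPolynomial.C (Real.sin (t/4)) * MvPolynomial.X 1) ^ 2, ?_, ?_⟩
    · rw [homog_eval_eq]
      have e1 : (![-Real.cos (t/4), Real.sin (t/4)] : Fin 2 → ℝ) 0 = -Real.cos (t/4) := rfl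
      have e2 : (![-Real.cos (t/4), Real.sin (t/4)] : Fin 2 → ℝ) 1 = Real.sin (t/4) := rfl
      rw [e1, e2, map_neg]
      ring
    · simp only [MvPolynomial.eval_mul, MvPolynomial.eval_pow, MvPolynomial.eval_sub,
        MvPolynomial.eval_C, MvPolynomial.eval_X]
      have e1 : (![-Real.cos (t/4), Real.sin (t/4)] : Fin 2 → ℝ) 0 = -Real.cos (t/4) := rfl
      have e2 : (![-Real.cos (t/4), Real.sin (t/4)] : Fin 2 → ℝ) 1 = Real.sin (t/4) := rfl
      rw [e1, e2]
      nlinarith [hpy]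
lemma circle_param {x : Fin 2 → ℝ} (hx : x ∈ circleS) :
    ∃ θ : ℝ, x = ![Real.cos θ, Real.sin θ] := by
  have h : x 0 ^ 2 + x 1 ^ 2 = 1 := hx
  have h0 : -1 ≤ x 0 := by nlinarith
  have h1 : x 0 ≤ 1 := by nlinarith
  have hcos : Real.cos (Real.arccos (x 0)) = x 0 := Real.cos_arccos h0 h1
  have hsin : Real.sin (Real.arccos (x 0)) = Real.sqrt (1 - x 0 ^ 2) := Real.sin_arccos _
  have hsq : Real.sqrt (1 - x 0 ^ 2) = |x 1| := by
    rw [show 1 - x 0 ^ 2 = x 1 ^ 2 by linarith, Real.sqrt_sq_eq_abs]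
  rcases le_or_gt 0 (x 1) with hpos | hneg
  · refine ⟨Real.arccos (x 0), funext fun i => ?_⟩
    fin_cases i
    · simpa using hcos.symm
    · show x 1 = Real.sin (Real.arccos (x 0))
      rw [hsin, hsq, abs_of_nonneg hpos]
  · refine ⟨-Real.arccos (x 0), funext fun i => ?_⟩
    fin_cases i
    · show x 0 = Real.cos (-Real.arccos (x 0))
      rw [Real.cos_neg, hcos]
    · show x 1 = Real.sin (-Real.arccos (x 0))
      rw [Real.sin_neg, hsin, hsq, abs_of_neg hneg, neg_neg]

lemma cos_sin_mem_circle (t : ℝ) : (![Real.cos t, Real.sin t] : Fin 2 → ℝ) ∈ circleS := by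
  show Real.cos t ^ 2 + Real.sin t ^ 2 = 1
  exact Real.cos_sq_add_sin_sq t

lemma zproj_eq_range :
    ZProj 4 Pex circleS = Set.range (fun t : ℝ =>
      ((![Real.cos t, Real.sin t] : Fin 2 → ℝ),
        Projectivization.mk ℝ ![Real.sin (t/4), Real.cos (t/4)] (sincos_ne (t/4)))) := by
  ext ⟨x, p⟩
  constructor
  · rintro ⟨hxS, v, hv, hmk, heval⟩
    obtain ⟨θ, rfl⟩ := circle_param hxS
    rcases (root_iff θ v hv).1 heval with h | h
    · refine ⟨θ, ?_⟩
      show (_, Projectivization.mk ℝ ![Real.sin (θ/4), Real.cos (θ/4)] (sincos_ne (θ/4)))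
        = (![Real.cos θ, Real.sin θ], p)
      rw [h.symm.trans hmk]
    · refine ⟨θ - 2 * Real.pi, ?_⟩
      show (![Real.cos (θ - 2*Real.pi), Real.sin (θ - 2*Real.pi)],
          Projectivization.mk ℝ ![Real.sin ((θ - 2*Real.pi)/4), Real.cos ((θ - 2*Real.pi)/4)]
            (sincos_ne ((θ - 2*Real.pi)/4)))
        = (![Real.cos θ, Real.sin θ], p)
      rw [Prod.mk.injEq]
      constructor
      · funext i
        fin_cases i
        · show Real.cos (θ - 2 * Real.pi) = Real.cos θ
          exact Real.cos_sub_two_pi θ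
        · show Real.sin (θ - 2 * Real.pi) = Real.sin θ
          exact Real.sin_sub_two_pi θ
      · refine Eq.trans ?_ (h.symm.trans hmk)
        rw [mk_eq_mk_iff_det]
        have hq : (θ - 2 * Real.pi) / 4 = θ/4 - Real.pi / 2 := by ring
        have e1 : (![-Real.cos (θ/4), Real.sin (θ/4)] : Fin 2 → ℝ) 0 = -Real.cos (θ/4) := rfl
        have e2 : (![-Real.cos (θ/4), Real.sin (θ/4)] : Fin 2 → ℝ) 1 = Real.sin (θ/4) := rfl
        have e3 : (![Real.sin ((θ - 2*Real.pi)/4), Real.cos ((θ - 2*Real.pi)/4)] : Fin 2 → ℝ) 0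
            = Real.sin ((θ - 2*Real.pi)/4) := rfl
        have e4 : (![Real.sin ((θ - 2*Real.pi)/4), Real.cos ((θ - 2*Real.pi)/4)] : Fin 2 → ℝ) 1
            = Real.cos ((θ - 2*Real.pi)/4) := rfl
        rw [e1, e2, e3, e4, hq, Real.sin_sub_pi_div_two, Real.cos_sub_pi_div_two]
        ring
  · rintro ⟨t, ht⟩
    rw [← ht]
    refine ⟨cos_sin_mem_circle t, ![Real.sin (t/4), Real.cos (t/4)], sincos_ne (t/4), rfl, ?_⟩
    rw [eval_homog]
    have e1 : (![Real.sin (t/4), Real.cos (t/4)] : Fin 2 → ℝ) 0 = Real.sin (t/4) := rfl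
    have e2 : (![Real.sin (t/4), Real.cos (t/4)] : Fin 2 → ℝ) 1 = Real.cos (t/4) := rfl
    rw [e1, e2]
    ring
/-- The circle curve. -/
noncomputable def xfun (t : ℝ) : Fin 2 → ℝ := ![Real.cos t, Real.sin t]

/-- The first projective root curve. -/
noncomputable def r1fun (t : ℝ) : RP1 :=
  Projectivization.mk ℝ ![Real.sin (t/4), Real.cos (t/4)] (sincos_ne (t/4))

/-- The second projective root curve. -/
noncomputable def r2fun (t : ℝ) : RP1 :=
  Projectivization.mk ℝ ![-Real.cos (t/4), Real.sin (t/4)] (negcossin_ne (t/4))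

lemma cont_xcurve : Continuous xfun := by
  apply continuous_pi
  intro i
  fin_cases i
  · simpa [xfun] using Real.continuous_cos
  · simpa [xfun] using Real.continuous_sin

lemma cont_r1 : Continuous r1fun := by
  apply continuous_mk_curve
  apply continuous_pi
  intro i
  fin_cases i
  · simpa [Function.comp_def] using Real.continuous_sin.comp (continuous_id.div_const 4)
  · simpa [Function.comp_def] using Real.continuous_cos.comp (continuous_id.div_const 4)

lemma cont_r2 : Continuous r2fun := by
  apply continuous_mk_curve
  apply continuous_pi
  intro i
  fin_cases i
  · exact (Real.continuous_cos.comp (continuous_id.div_const 4)).neg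
  · simpa [Function.comp_def] using Real.continuous_sin.comp (continuous_id.div_const 4)

lemma zproj_connected : IsConnected (ZProj 4 Pex circleS) := by
  rw [zproj_eq_range]
  exact isConnected_range (cont_xcurve.prodMk cont_r1)

lemma eval_r1_zero (t : ℝ) : MvPolynomial.eval ![Real.sin (t/4), Real.cos (t/4)]
    (homog 4 (evalP Pex ![Real.cos t, Real.sin t])) = 0 := by
  rw [eval_homog]
  have e1 : (![Real.sin (t/4), Real.cos (t/4)] : Fin 2 → ℝ) 0 = Real.sin (t/4) := rfl
  have e2 : (![Real.sin (t/4), Real.cos (t/4)] : Fin 2 → ℝ) 1 = Real.cos (t/4) := rfl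
  rw [e1, e2]; ring

lemma not_projDelineable : ¬ ProjDelineable 4 Pex circleS := by
  rintro ⟨k, θ, hcont, hdisj, hroot, hmult⟩
  have hxS : ∀ t, xfun t ∈ circleS := fun t => cos_sin_mem_circle t
  obtain ⟨l₀, hl₀⟩ := (hroot (xfun 0) (hxS 0) ![Real.sin (0/4), Real.cos (0/4)]
      (sincos_ne (0/4))).1 (eval_r1_zero 0)
  have hl₀' : θ l₀ (xfun 0) = r1fun 0 := hl₀
  have hcover : ∀ t, θ l₀ (xfun t) = r1fun t ∨ θ l₀ (xfun t) = r2fun t := by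
    intro t
    have hrep := (θ l₀ (xfun t)).mk_rep
    have hx : MvPolynomial.eval (θ l₀ (xfun t)).rep
        (homog 4 (evalP Pex ![Real.cos t, Real.sin t])) = 0 :=
      (hroot (xfun t) (hxS t) _ (θ l₀ (xfun t)).rep_nonzero).2 ⟨l₀, hrep.symm⟩
    rcases (root_iff t _ (θ l₀ (xfun t)).rep_nonzero).1 hx with h | h
    · left; exact hrep.symm.trans h
    · right; exact hrep.symm.trans h
  have hθcont : Continuous (fun t => θ l₀ (xfun t)) :=
    (hcont l₀).comp_continuous cont_xcurve hxS
  have hA : IsClosed {t : ℝ | θ l₀ (xfun t) = r1fun t} := isClosed_eq hθcont cont_r1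
  have hB : IsClosed {t : ℝ | θ l₀ (xfun t) = r2fun t} := isClosed_eq hθcont cont_r2
  have hdist : ∀ t : ℝ, r1fun t ≠ r2fun t := fun t => distinct_roots t
  have hcompl : {t : ℝ | θ l₀ (xfun t) = r1fun t} = {t : ℝ | θ l₀ (xfun t) = r2fun t}ᶜ := by
    ext t
    simp only [Set.mem_setOf_eq, Set.mem_compl_iff]
    exact ⟨fun h1 h2 => hdist t (h1.symm.trans h2), fun h2 => (hcover t).resolve_right h2⟩
  have hclopen : IsClopen {t : ℝ | θ l₀ (xfun t) = r1fun t} :=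
    ⟨hA, hcompl ▸ hB.isOpen_compl⟩
  have huniv : {t : ℝ | θ l₀ (xfun t) = r1fun t} = Set.univ :=
    hclopen.eq_univ ⟨0, hl₀'⟩
  have h2pi : θ l₀ (xfun (2 * Real.pi)) = r1fun (2 * Real.pi) :=
    (huniv ▸ Set.mem_univ (2 * Real.pi) : (2 * Real.pi) ∈ _)
  have hxper : xfun (2 * Real.pi) = xfun 0 := by
    funext i
    fin_cases i
    · show Real.cos (2 * Real.pi) = Real.cos 0
      rw [Real.cos_two_pi, Real.cos_zero]
    · show Real.sin (2 * Real.pi) = Real.sin 0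
      rw [Real.sin_two_pi, Real.sin_zero]
  have hcontra : r1fun 0 = r1fun (2 * Real.pi) :=
    hl₀'.symm.trans ((by rw [hxper] : θ l₀ (xfun (2 * Real.pi)) = θ l₀ (xfun 0)).symm.trans h2pi)
  rw [r1fun, r1fun, mk_eq_mk_iff_det] at hcontra
  have e1 : (![Real.sin (2*Real.pi/4), Real.cos (2*Real.pi/4)] : Fin 2 → ℝ) 0
      = Real.sin (2*Real.pi/4) := rfl
  have e2 : (![Real.sin (2*Real.pi/4), Real.cos (2*Real.pi/4)] : Fin 2 → ℝ) 1
      = Real.cos (2*Real.pi/4) := rfl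
  have e3 : (![Real.sin ((0:ℝ)/4), Real.cos ((0:ℝ)/4)] : Fin 2 → ℝ) 0 = Real.sin ((0:ℝ)/4) := rfl
  have e4 : (![Real.sin ((0:ℝ)/4), Real.cos ((0:ℝ)/4)] : Fin 2 → ℝ) 1 = Real.cos ((0:ℝ)/4) := rfl
  rw [e1, e2, e3, e4] at hcontra
  have hh : (2 : ℝ) * Real.pi / 4 = Real.pi / 2 := by ring
  rw [hh] at hcontra
  norm_num [Real.sin_pi_div_two, Real.cos_pi_div_two] at hcontra
/-- For the unit circle `S` and the polynomial `Pex`, for every `t ∈ ℝ`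
the projective roots of `Pex` above `(cos t, sin t)` are exactly the two (distinct) points
`(sin(t/4) : cos(t/4))` and `(−cos(t/4) : sin(t/4))`, each of multiplicity two with respect
to degree `4`; consequently `Z_{ℝP¹}(Pex,S)` is connected, being the image of `ℝ` under
`t ↦ ((cos t, sin t), (sin(t/4):cos(t/4)))`, and `Pex` is not projectively delineable
over `S`. -/
theorem circle_counterexample :
    (∀ t : ℝ, ∀ (v : Fin 2 → ℝ) (hv : v ≠ 0),
      (MvPolynomial.eval v (homog 4 (evalP Pex ![Real.cos t, Real.sin t])) = 0 ↔
        Projectivization.mk ℝ v hv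
            = Projectivization.mk ℝ ![Real.sin (t/4), Real.cos (t/4)] (sincos_ne (t/4)) ∨
        Projectivization.mk ℝ v hv
            = Projectivization.mk ℝ ![-Real.cos (t/4), Real.sin (t/4)] (negcossin_ne (t/4)))) ∧
    (∀ t : ℝ,
      Projectivization.mk ℝ ![Real.sin (t/4), Real.cos (t/4)] (sincos_ne (t/4))
        ≠ Projectivization.mk ℝ ![-Real.cos (t/4), Real.sin (t/4)] (negcossin_ne (t/4))) ∧
    (∀ t : ℝ,
      HasProjRootOfMult (homog 4 (evalP Pex ![Real.cos t, Real.sin t]))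
        ![Real.sin (t/4), Real.cos (t/4)] 2 ∧
      HasProjRootOfMult (homog 4 (evalP Pex ![Real.cos t, Real.sin t]))
        ![-Real.cos (t/4), Real.sin (t/4)] 2) ∧
    ZProj 4 Pex circleS = Set.range (fun t : ℝ =>
      ((![Real.cos t, Real.sin t] : Fin 2 → ℝ),
        Projectivization.mk ℝ ![Real.sin (t/4), Real.cos (t/4)] (sincos_ne (t/4)))) ∧
    IsConnected (ZProj 4 Pex circleS) ∧
    ¬ ProjDelineable 4 Pex circleS := by
  exact ⟨fun t v hv => root_iff t v hv, fun t => distinct_roots t,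
    fun t => mult_two t, zproj_eq_range, zproj_connected, not_projDelineable⟩
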